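/- Let F be a linearly ordered field and let M ⊆ M_n(F). Then the following are equivalent: (1) M is a monoid of matrices satisfying (CD)^{(m)} = C^{(m)}D^{(m)} for all C, D ∈ M and all positive integers m; (2) M is a monoid of matrices satisfying (a) (CD)^{(2)} = C^{(2)}D^{(2)} for all C, D ∈ M, and (b) for all C, D ∈ M and all i, j ∈ {1,…,n} there exists k ∈ {1,…,n} such that (CD)_{ij} = (C)_{ik}(D)_{kj}. -/

import Mathlib

open Matrix Kronecker

/-- The partial determinant `det₁`: for `A ∈ M_{mn}(F) = M_m(F) ⊗ M_n(F)`,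
`det1 A` is the `n × n` matrix whose `(i,j)` entry is the determinant of the
block `A_{ij} ∈ M_m(F)` given by `(A_{ij})_{kl} = A (k,i) (l,j)`. -/
def det1 {F : Type*} [Field F] {m n : ℕ}
    (A : Matrix (Fin m × Fin n) (Fin m × Fin n) F) : Matrix (Fin n) (Fin n) F :=
  Matrix.of fun i j => Matrix.det (Matrix.of fun k l : Fin m => A (k, i) (l, j))

/-- The `m`-th Hadamard (entrywise) power of a matrix. -/
def hpow {F : Type*} [Monoid F] {n : ℕ} (B : Matrix (Fin n) (Fin n) F) (m : ℕ) :
    Matrix (Fin n) (Fin n) F :=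
  Matrix.of fun i j => (B i j) ^ m

/-- Characterization of monoids of matrices over a linearly ordered field on
which the Hadamard power distributes over matrix multiplication. -/
lemma aux_all_zero {F : Type*} [Field F] [LinearOrder F] [IsStrictOrderedRing F] {n : ℕ} {a : Fin n → F}
    (h : ∑ l, (a l)^2 = 0) : ∀ l, a l = 0 := by
  intro l
  have := (Finset.sum_eq_zero_iff_of_nonneg (fun i _ => sq_nonneg (a i))).mp h l (Finset.mem_univ l)
  exact pow_eq_zero_iff two_ne_zero |>.mp this

lemma aux_exists {F : Type*} [Field F] [LinearOrder F] [IsStrictOrderedRing F] {n : ℕ} (a : Fin n → F) (i : Fin n)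
    (h2 : (∑ k, a k)^2 = ∑ k, (a k)^2)
    (h4 : (∑ k, a k)^4 = ∑ k, (a k)^4) :
    ∃ k, ∑ l, a l = a k := by
  set b : Fin n → F := fun k => (a k)^2 with hb
  have hb2 : (∑ k, b k)^2 = ∑ k, (b k)^2 := by
    have h' : ∑ k, b k = (∑ k, a k)^2 := h2.symm
    rw [h', ← pow_mul]
    simpa [hb, ← pow_mul] using h4
  have cross : ∑ k, ∑ l ∈ Finset.univ.erase k, b k * b l = 0 := by
    have expand : (∑ k, b k)^2 = ∑ k, ∑ l, b k * b l := by
      rw [sq, Finset.sum_mul_sum]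
    have split : ∀ k : Fin n, ∑ l, b k * b l
        = b k * b k + ∑ l ∈ Finset.univ.erase k, b k * b l :=
      fun k => (Finset.add_sum_erase _ _ (Finset.mem_univ k)).symm
    have : ∑ k, (b k * b k) + ∑ k, ∑ l ∈ Finset.univ.erase k, b k * b l
        = ∑ k, (b k)^2 := by
      rw [← Finset.sum_add_distrib, ← hb2, expand]
      exact Finset.sum_congr rfl fun k _ => by rw [split k]
    have hdiag : ∑ k, (b k * b k) = ∑ k, (b k)^2 := by
      refine Finset.sum_congr rfl fun k _ => (sq (b k)).symm
    linarith [this, hdiag]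
  have hbnn : ∀ k l : Fin n, 0 ≤ b k * b l := fun k l =>
    mul_nonneg (sq_nonneg _) (sq_nonneg _)
  have hcross0 : ∀ k l : Fin n, l ≠ k → b k * b l = 0 := by
    intro k l hl
    have h1 := (Finset.sum_eq_zero_iff_of_nonneg
      (fun k _ => Finset.sum_nonneg fun l _ => hbnn k l)).mp cross k (Finset.mem_univ k)
    exact (Finset.sum_eq_zero_iff_of_nonneg (fun l _ => hbnn k l)).mp h1 l
      (Finset.mem_erase.mpr ⟨hl, Finset.mem_univ l⟩)
  by_cases hall : ∀ l, a l = 0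
  · exact ⟨i, by simp [hall]⟩
  · push_neg at hall
    obtain ⟨k, hk⟩ := hall
    refine ⟨k, Finset.sum_eq_single k (fun l _ hl => ?_) (fun h => absurd (Finset.mem_univ k) h)⟩
    have := hcross0 k l hl
    have hbk : b k ≠ 0 := pow_ne_zero _ hk
    have : b l = 0 := by
      rcases mul_eq_zero.mp this with h | h
      · exact absurd h hbk
      · exact h
    exact pow_eq_zero_iff two_ne_zero |>.mp this

lemma aux_back {F : Type*} [Field F] [LinearOrder F] [IsStrictOrderedRing F] {n : ℕ} (a : Fin n → F) (k : Fin n)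
    (hk : ∑ l, a l = a k)
    (h2 : (∑ l, a l)^2 = ∑ l, (a l)^2)
    (m : ℕ) (hm : 0 < m) :
    (∑ l, a l)^m = ∑ l, (a l)^m := by
  have hz : ∀ l, l ≠ k → a l = 0 := by
    have : ∑ l ∈ Finset.univ.erase k, (a l)^2 = 0 := by
      have := h2
      rw [hk] at this
      have hsplit : (a k)^2 + ∑ l ∈ Finset.univ.erase k, (a l)^2 = ∑ l, (a l)^2 :=
        Finset.add_sum_erase _ (fun l => (a l)^2) (Finset.mem_univ k)
      linarith
    intro l hl
    have := (Finset.sum_eq_zero_iff_of_nonneg (fun l _ => sq_nonneg (a l))).mp this l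
      (Finset.mem_erase.mpr ⟨hl, Finset.mem_univ l⟩)
    exact pow_eq_zero_iff two_ne_zero |>.mp this
  have hs : ∑ l, (a l)^m = (a k)^m :=
    Finset.sum_eq_single k (fun l _ hl => by rw [hz l hl, zero_pow hm.ne'])
      (fun h => absurd (Finset.mem_univ k) h)
  rw [hk, hs]

theorem monoid_hpow_mul_equiv {F : Type*} [Field F] [LinearOrder F] [IsStrictOrderedRing F] {n : ℕ}
    (M : Set (Matrix (Fin n) (Fin n) F)) :
    ((1 : Matrix (Fin n) (Fin n) F) ∈ M ∧ (∀ C ∈ M, ∀ D ∈ M, C * D ∈ M) ∧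
      (∀ C ∈ M, ∀ D ∈ M, ∀ m : ℕ, 0 < m → hpow (C * D) m = hpow C m * hpow D m)) ↔
    ((1 : Matrix (Fin n) (Fin n) F) ∈ M ∧ (∀ C ∈ M, ∀ D ∈ M, C * D ∈ M) ∧
      (∀ C ∈ M, ∀ D ∈ M, hpow (C * D) 2 = hpow C 2 * hpow D 2) ∧
      (∀ C ∈ M, ∀ D ∈ M, ∀ i j, ∃ k, (C * D) i j = C i k * D k j)) := by
  constructor
  · rintro ⟨h1, hmul, hpows⟩
    refine ⟨h1, hmul, fun C hC D hD => hpows C hC D hD 2 (by norm_num), ?_⟩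
    intro C hC D hD i j
    set a : Fin n → F := fun k => C i k * D k j with ha
    have key : ∀ m : ℕ, 0 < m → (∑ k, a k)^m = ∑ k, (a k)^m := by
      intro m hm
      have := congrFun (congrFun (hpows C hC D hD m hm) i) j
      simpa [hpow, Matrix.mul_apply, mul_pow, ha] using this
    obtain ⟨k, hk⟩ := aux_exists a i (key 2 (by norm_num)) (key 4 (by norm_num))
    exact ⟨k, by rw [Matrix.mul_apply]; exact hk⟩
  · rintro ⟨h1, hmul, hp2, hsingle⟩
    refine ⟨h1, hmul, ?_⟩
    intro C hC D hD m hm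
    ext i j
    set a : Fin n → F := fun k => C i k * D k j with ha
    obtain ⟨k, hk⟩ := hsingle C hC D hD i j
    rw [Matrix.mul_apply] at hk
    have h2 : (∑ l, a l)^2 = ∑ l, (a l)^2 := by
      have := congrFun (congrFun (hp2 C hC D hD) i) j
      simpa [hpow, Matrix.mul_apply, mul_pow, ha] using this
    have := aux_back a k hk h2 m hm
    simpa [hpow, Matrix.mul_apply, mul_pow, ha] using this
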